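/- arXiv:1301.2059 — 5 statements merged into one kernel-verified Lean document; each statement's English description precedes it below -/
import Mathlib

section
/- Let V ⊂ ℝ^d be a compact convex set with 0 ∈ V, and let v ↦ q_v be a C¹ map from V to Q(N) which is regular at 0, meaning that no point of {0} × (q_0⁻¹(0) ∩ S^N) is a critical point (in the tangent-cone sense) of the function (v,x) ↦ q_v(x) on V × S^N. Then for every sufficiently small ε > 0 the homotopy (t,v,x) ↦ q_{tv}(x) + (1−t)ε, t ∈ [0,1], (v,x) ∈ (εV) × S^N, is regular: for each t, no point (v,x) ∈ (εV) × S^N with q_{tv}(x) + (1−t)ε = 0 is a critical point in the tangent-cone sense of the function (v,x) ↦ q_{tv}(x) + (1−t)ε. -/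
open scoped RealInnerProductSpace Pointwise

/-- The tangent cone of a subset `W` of a normed space at `z`: the closure of the set of
velocities at `z` of smooth (C¹) curves starting from `z` and contained in `W` (near time `0`). -/
def curveTangentCone {E : Type*} [NormedAddCommGroup E] [NormedSpace ℝ E]
    (W : Set E) (z : E) : Set E :=
  closure {ξ : E | ∃ γ : ℝ → E, γ 0 = z ∧ ContDiff ℝ 1 γ ∧
    (∃ δ > 0, ∀ t ∈ Set.Icc (0:ℝ) δ, γ t ∈ W) ∧ deriv γ 0 = ξ}

/-- `z` is a critical point of the `C¹` function `g` on the subset `W` (in the tangent-cone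
sense) if `⟨d_z g, ξ⟩ ≤ 0` for every `ξ` in the tangent cone of `W` at `z`. -/
def IsCriticalPt {E : Type*} [NormedAddCommGroup E] [NormedSpace ℝ E]
    (g : E → ℝ) (W : Set E) (z : E) : Prop :=
  ∀ ξ ∈ curveTangentCone W z, fderiv ℝ g z ξ ≤ 0

open Filter Topology

section AuxLemmas

variable {E : Type*} [NormedAddCommGroup E] [NormedSpace ℝ E]
variable {F : Type*} [NormedAddCommGroup F] [InnerProductSpace ℝ F] [CompleteSpace F]

lemma fderiv_qform (q : E → F →L[ℝ] F) (hq : ContDiff ℝ 1 q) (t c : ℝ) (z : E × F) (a : E) (b : F) :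
    fderiv ℝ (fun w : E × F => (⟪q (t • w.1) w.2, w.2⟫ + c : ℝ)) z (a, b)
    = ⟪(fderiv ℝ q (t • z.1)) (t • a) z.2, z.2⟫ + ⟪q (t • z.1) b, z.2⟫ + ⟪q (t • z.1) z.2, b⟫ := by
  have h1 : HasFDerivAt (fun w : E × F => t • w.1) (t • ContinuousLinearMap.fst ℝ E F) z :=
    (hasFDerivAt_fst).const_smul t
  have h2 : HasFDerivAt (fun w : E × F => q (t • w.1))
      ((fderiv ℝ q (t • z.1)).comp (t • ContinuousLinearMap.fst ℝ E F)) z :=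
    (((hq.differentiable one_ne_zero) (t • z.1)).hasFDerivAt).comp z h1
  have h3 : HasFDerivAt (fun w : E × F => w.2) (ContinuousLinearMap.snd ℝ E F) z :=
    hasFDerivAt_snd
  have h4 := h2.clm_apply h3
  have h5 := h4.inner ℝ h3
  have h6 := h5.add_const c
  rw [h6.fderiv]
  simp [fderivInnerCLM_apply, ContinuousLinearMap.comp_apply, ContinuousLinearMap.prod_apply,
    ContinuousLinearMap.add_apply, ContinuousLinearMap.flip_apply, ContinuousLinearMap.smul_apply,
    inner_add_left]
  ring

lemma sphere_curve (x b : F) (hx : ‖x‖ = 1) (hb : ⟪x, b⟫ = 0) :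
    ∃ γ : ℝ → F, γ 0 = x ∧ ContDiff ℝ 1 γ ∧ (∀ s : ℝ, ‖γ s‖ = 1) ∧ HasDerivAt γ b 0 := by
  set ψ : ℝ → ℝ := fun s => 1 + s ^ 2 * ‖b‖ ^ 2 with hψ
  have hψpos : ∀ s, 0 < ψ s := fun s => by positivity
  set c : ℝ → ℝ := fun s => (Real.sqrt (ψ s))⁻¹ with hc
  refine ⟨fun s => c s • (x + s • b), by simp [hc, hψ], ?_, ?_, ?_⟩
  · have hψc : ContDiff ℝ 1 ψ := by
      apply contDiff_const.add
      exact (contDiff_id.pow 2).mul contDiff_const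
    have : ContDiff ℝ 1 c := ((hψc.sqrt fun s => (hψpos s).ne').inv
      (fun s => (Real.sqrt_pos.mpr (hψpos s)).ne'))
    exact this.smul (contDiff_const.add (contDiff_id.smul contDiff_const))
  · intro s
    have hn : ‖x + s • b‖ = Real.sqrt (ψ s) := by
      rw [← Real.sqrt_sq (norm_nonneg (x + s • b))]
      congr 1
      rw [@norm_add_sq_real, hx, real_inner_smul_right, hb, norm_smul]
      simp [hψ, mul_pow]
    rw [norm_smul, hn, hc]
    simp only [Real.norm_eq_abs]
    rw [abs_of_pos (by positivity)]
    exact inv_mul_cancel₀ (Real.sqrt_pos.mpr (hψpos s)).ne'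
  · have hψ0 : HasDerivAt ψ 0 0 := by
      have : HasDerivAt (fun s : ℝ => s ^ 2 * ‖b‖ ^ 2) ((2 * 0 ^ 1) * ‖b‖ ^ 2) 0 :=
        (hasDerivAt_pow 2 0).mul_const _
      have h := this.const_add 1; simp only [pow_one, mul_zero, zero_mul] at h; exact h
    have hsq : HasDerivAt (fun s => Real.sqrt (ψ s)) 0 0 := by
      have h1 : HasDerivAt Real.sqrt (1 / (2 * Real.sqrt (ψ 0))) (ψ 0) :=
        Real.hasDerivAt_sqrt (hψpos 0).ne'
      have h := h1.comp 0 hψ0; simp only [mul_zero] at h; exact h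
    have hcd : HasDerivAt c 0 0 := by
      have := hsq.inv (Real.sqrt_pos.mpr (hψpos 0)).ne'
      simp only [neg_zero, zero_div] at this; exact this
    have hlin : HasDerivAt (fun s : ℝ => x + s • b) b 0 := by
      simpa using ((hasDerivAt_id (0:ℝ)).smul_const b).const_add x
    have := hcd.smul hlin
    have hc0 : c 0 = 1 := by simp [hc, hψ]
    convert this using 1
    · funext s; simp [smul_add]
    · simp [hc0]

lemma crit_eigen (q : E → F →L[ℝ] F) (hq : ContDiff ℝ 1 q) (hsa : ∀ v, IsSelfAdjoint (q v))
    {W : Set E} {v : E} {x : F} (hv : v ∈ W) (hx : ‖x‖ = 1) (t c : ℝ)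
    (hcrit : IsCriticalPt (fun w : E × F => (⟪q (t • w.1) w.2, w.2⟫ + c : ℝ))
      (W ×ˢ Metric.sphere (0 : F) 1) (v, x)) :
    q (t • v) x = ⟪q (t • v) x, x⟫ • x := by
  have key : ∀ b : F, ⟪x, b⟫ = 0 → ⟪q (t • v) x, b⟫ ≤ 0 := by
    intro b hb
    obtain ⟨γ₂, hγ₂0, hγ₂c, hγ₂s, hγ₂d⟩ := sphere_curve x b hx hb
    have hmem : ((0 : E), b) ∈ curveTangentCone (W ×ˢ Metric.sphere (0 : F) 1) (v, x) := by
      apply subset_closure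
      refine ⟨fun s => (v, γ₂ s), by simp [hγ₂0], contDiff_const.prodMk hγ₂c,
        ⟨1, one_pos, fun s _ => ⟨hv, by simp [mem_sphere_zero_iff_norm, hγ₂s s]⟩⟩, ?_⟩
      exact ((hasDerivAt_const (0:ℝ) v).prodMk hγ₂d).deriv
    have := hcrit _ hmem
    rw [fderiv_qform q hq t c (v, x) 0 b] at this
    have hsymm : ⟪q (t • v) b, x⟫ = ⟪q (t • v) x, b⟫ := by
      have h1 : ⟪q (t • v) b, x⟫ = ⟪b, q (t • v) x⟫ := (hsa (t • v)).isSymmetric b x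
      rw [h1, real_inner_comm]
    simp only [smul_zero, map_zero, ContinuousLinearMap.zero_apply, inner_zero_left,
      zero_add] at this
    rw [hsymm] at this
    linarith
  have key2 : ∀ b : F, ⟪x, b⟫ = 0 → ⟪q (t • v) x, b⟫ = 0 := by
    intro b hb
    have h1 := key b hb
    have h2 := key (-b) (by rw [inner_neg_right, hb, neg_zero])
    rw [inner_neg_right] at h2
    linarith
  set y : F := q (t • v) x - ⟪q (t • v) x, x⟫ • x with hy
  have hxy : ⟪x, y⟫ = 0 := by
    rw [hy, inner_sub_right, real_inner_smul_right, real_inner_self_eq_norm_sq, hx]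
    rw [real_inner_comm]
    ring
  have := key2 y hxy
  have hyy : ⟪q (t • v) x, y⟫ = ‖y‖ ^ 2 := by
    have : q (t • v) x = y + ⟪q (t • v) x, x⟫ • x := by rw [hy]; abel
    rw [this, inner_add_left, real_inner_smul_left, hxy, real_inner_self_eq_norm_sq]
    ring
  rw [hyy] at this
  have : y = 0 := by
    have := pow_eq_zero_iff (n := 2) (by norm_num) |>.mp (le_antisymm (le_of_eq this) (by positivity))
    simpa using this
  have := sub_eq_zero.mp (hy ▸ this)
  exact this

lemma crit_dir (q : E → F →L[ℝ] F) (hq : ContDiff ℝ 1 q)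
    {V : Set E} (hVconv : Convex ℝ V) {ε : ℝ} {v : E} {x : F}
    (hv : v ∈ ε • V) (hx : ‖x‖ = 1) (t c : ℝ)
    (hcrit : IsCriticalPt (fun w : E × F => (⟪q (t • w.1) w.2, w.2⟫ + c : ℝ))
      ((ε • V) ×ˢ Metric.sphere (0 : F) 1) (v, x)) :
    ∀ u ∈ V, ⟪(fderiv ℝ q (t • v)) (t • (ε • u - v)) x, x⟫ ≤ 0 := by
  intro u hu
  set a : E := ε • u - v with ha
  have hmem : (a, (0 : F)) ∈ curveTangentCone ((ε • V) ×ˢ Metric.sphere (0 : F) 1) (v, x) := by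
    apply subset_closure
    refine ⟨fun s => (v + s • a, x), by simp, ?_, ⟨1, one_pos, fun s hs => ?_⟩, ?_⟩
    · exact (contDiff_const.add (contDiff_id.smul contDiff_const)).prodMk contDiff_const
    · refine ⟨?_, by simp [mem_sphere_zero_iff_norm, hx]⟩
      exact (hVconv.smul ε).add_smul_sub_mem hv (Set.smul_mem_smul_set hu) hs
    · have h1 : HasDerivAt (fun s : ℝ => v + s • a) a 0 := by
        simpa using ((hasDerivAt_id (0:ℝ)).smul_const a).const_add v
      exact (h1.prodMk (hasDerivAt_const 0 x)).deriv
  have := hcrit _ hmem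
  rw [fderiv_qform q hq t c (v, x) a 0] at this
  simpa using this


section Gap
variable {G : Type*} [NormedAddCommGroup G] [InnerProductSpace ℝ G] [FiniteDimensional ℝ G]

lemma gap_lemma (T : G →L[ℝ] G) (hT : IsSelfAdjoint T) :
    ∃ C > 0, ∀ y : G, |⟪T y, y⟫| ≤ C * ‖T y‖ ^ 2 := by
  have hsymm : ∀ u v : G, ⟪T u, v⟫ = ⟪u, T v⟫ := fun u v => hT.isSymmetric u v
  set K : Submodule ℝ G := LinearMap.ker (T : G →ₗ[ℝ] G) with hK
  set f : Kᗮ →ₗ[ℝ] G := (T : G →ₗ[ℝ] G).comp (Submodule.subtype Kᗮ) with hf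
  have hinj : LinearMap.ker f = ⊥ := by
    rw [LinearMap.ker_eq_bot']
    intro r hr
    have h1 : (r : G) ∈ K := hr
    have : ⟪(r : G), (r : G)⟫ = 0 := r.2 _ h1
    have : (r : G) = 0 := by rwa [inner_self_eq_zero] at this
    exact Subtype.ext this
  obtain ⟨Kc, hKc, hanti⟩ := f.exists_antilipschitzWith hinj
  refine ⟨(Kc : ℝ) + 1, by positivity, fun y => ?_⟩
  set P := K.orthogonalProjectionOnto
  set r : G := y - (P y : G) with hr
  have hrmem : r ∈ Kᗮ := K.sub_starProjection_mem_orthogonal y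
  have hPy : ((P y : G)) ∈ K := (P y).2
  have hTy : T y = T r := by
    have h0 : T (y - r) = 0 := by
      have : y - r = (P y : G) := by simp [hr]
      rw [this]; exact hPy
    rw [map_sub] at h0
    exact sub_eq_zero.mp h0
  have hval : ⟪T y, y⟫ = ⟪T r, r⟫ := by
    have h0 : ⟪T r, (P y : G)⟫ = 0 := by
      rw [hsymm]
      have : T (P y : G) = 0 := hPy
      rw [this, inner_zero_right]
    calc ⟪T y, y⟫ = ⟪T r, (P y : G) + r⟫ := by rw [hTy]; congr 1; simp [hr]
    _ = ⟪T r, (P y : G)⟫ + ⟪T r, r⟫ := inner_add_right _ _ _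
    _ = ⟪T r, r⟫ := by rw [h0, zero_add]
  have hrle : ‖r‖ ≤ (Kc : ℝ) * ‖T r‖ := by
    have := hanti.le_mul_dist (⟨r, hrmem⟩ : Kᗮ) 0
    simpa [hf, dist_eq_norm] using this
  calc |⟪T y, y⟫| = |⟪T r, r⟫| := by rw [hval]
    _ ≤ ‖T r‖ * ‖r‖ := abs_real_inner_le_norm _ _
    _ ≤ ‖T r‖ * ((Kc : ℝ) * ‖T r‖) := by
        exact mul_le_mul_of_nonneg_left hrle (norm_nonneg _)
    _ ≤ ((Kc : ℝ) + 1) * ‖T y‖ ^ 2 := by rw [hTy]; nlinarith [norm_nonneg (T r), Kc.2]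

end Gap

lemma crit_at_zero (q : E → F →L[ℝ] F) (hq : ContDiff ℝ 1 q) (hsa : ∀ v, IsSelfAdjoint (q v))
    {V : Set E} (x : F) (hx : ‖x‖ = 1) (hq0x : q 0 x = 0)
    (hle : ∀ u ∈ V, ⟪(fderiv ℝ q 0) u x, x⟫ ≤ 0) :
    IsCriticalPt (fun w : E × F => (⟪q w.1 w.2, w.2⟫ : ℝ))
      (V ×ˢ Metric.sphere (0 : F) 1) ((0 : E), x) := by
  have heq : (fun w : E × F => (⟪q w.1 w.2, w.2⟫ : ℝ))
      = fun w : E × F => (⟪q ((1:ℝ) • w.1) w.2, w.2⟫ + 0 : ℝ) := by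
    funext w; simp
  set Φ : E →L[ℝ] ℝ := (innerSL ℝ x).comp ((fderiv ℝ q 0).flip x) with hΦ
  have hΦval : ∀ y, Φ y = ⟪(fderiv ℝ q 0) y x, x⟫ := by
    intro y
    simp [hΦ, real_inner_comm]
  rintro ⟨a, b⟩ hξ
  rw [heq, fderiv_qform q hq 1 0 ((0 : E), x) a b]
  have hB : ⟪q ((1:ℝ) • (0:E)) b, x⟫ = 0 := by
    have h1 : ⟪q ((1:ℝ) • (0:E)) b, x⟫ = ⟪b, q ((1:ℝ) • (0:E)) x⟫ :=
      (hsa _).isSymmetric b x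
    rw [h1]
    simp [hq0x]
  have hC : ⟪q ((1:ℝ) • (0:E)) x, b⟫ = 0 := by simp [hq0x]
  have hmain : Φ a ≤ 0 := by
    have hclosed : IsClosed {ξ : E × F | Φ ξ.1 ≤ 0} :=
      isClosed_le (Φ.continuous.comp continuous_fst) continuous_const
    have hsub : {ξ : E × F | ∃ γ : ℝ → E × F, γ 0 = ((0:E), x) ∧ ContDiff ℝ 1 γ ∧
        (∃ δ > 0, ∀ t ∈ Set.Icc (0:ℝ) δ, γ t ∈ V ×ˢ Metric.sphere (0 : F) 1) ∧ deriv γ 0 = ξ}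
        ⊆ {ξ : E × F | Φ ξ.1 ≤ 0} := by
      rintro ⟨a', b'⟩ ⟨γ, hγ0, hγc, ⟨δ, hδ, hγW⟩, hγd⟩
      have hd : HasDerivAt γ (a', b') 0 := by
        have := ((hγc.differentiable one_ne_zero) 0).hasDerivAt
        rwa [hγd] at this
      have hd1 : HasDerivAt (fun s => (γ s).1) a' 0 :=
        (ContinuousLinearMap.fst ℝ E F).hasFDerivAt.comp_hasDerivAt 0 hd
      rw [hasDerivAt_iff_tendsto_slope] at hd1
      have h2 : Filter.Tendsto (slope (fun s => (γ s).1) 0) (nhdsWithin 0 (Set.Ioi 0)) (nhds a') :=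
        hd1.mono_left (nhdsWithin_mono 0 (fun y hy => Set.mem_compl_singleton_iff.mpr hy.ne'))
      have h3 := (Φ.continuous.tendsto a').comp h2
      refine le_of_tendsto h3 ?_
      filter_upwards [Ioc_mem_nhdsGT_of_mem ⟨le_refl (0:ℝ), hδ⟩] with s hs
      have hsl : slope (fun s => (γ s).1) 0 s = s⁻¹ • (γ s).1 := by
        rw [slope_def_module]
        simp [hγ0]
      have hmem := (hγW s ⟨hs.1.le, hs.2⟩).1
      have := hle _ hmem
      simp only [Function.comp_apply, hsl, map_smul, smul_eq_mul]
      have : Φ ((γ s).1) ≤ 0 := by rw [hΦval]; exact this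
      exact mul_nonpos_iff.mpr (Or.inl ⟨inv_nonneg.mpr hs.1.le, this⟩)
    exact closure_minimal hsub hclosed hξ
  rw [hB, hC]
  simp only [one_smul, add_zero]
  rw [← hΦval]
  exact hmain


end AuxLemmas

set_option maxHeartbeats 2000000 in
/-- let `V ⊆ ℝ^d` be compact convex with `0 ∈ V` and `v ↦ q_v` a `C¹` family of
quadratic forms (given by their self-adjoint operators `q v`) which is regular at `0`: no point
of `{0} × (q₀⁻¹(0) ∩ S^N)` is a critical point (tangent-cone sense) of `(v,x) ↦ q_v(x)` on
`V × S^N`. Then for every sufficiently small `ε > 0` the homotopy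
`(t,v,x) ↦ q_{tv}(x) + (1−t)ε` on `(εV) × S^N`, `t ∈ [0,1]`, is regular. -/
theorem statement5 {d N : ℕ} (V : Set (EuclideanSpace ℝ (Fin d)))
    (hVcpt : IsCompact V) (hVconv : Convex ℝ V) (hV0 : (0 : EuclideanSpace ℝ (Fin d)) ∈ V)
    (q : EuclideanSpace ℝ (Fin d) →
      (EuclideanSpace ℝ (Fin (N+1)) →L[ℝ] EuclideanSpace ℝ (Fin (N+1))))
    (hq : ContDiff ℝ 1 q)
    (hsa : ∀ v, IsSelfAdjoint (q v))
    (hreg : ∀ x : EuclideanSpace ℝ (Fin (N+1)), ‖x‖ = 1 → ⟪q 0 x, x⟫ = 0 →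
      ¬ IsCriticalPt
          (fun w : EuclideanSpace ℝ (Fin d) × EuclideanSpace ℝ (Fin (N+1)) =>
            (⟪q w.1 w.2, w.2⟫ : ℝ))
          (V ×ˢ Metric.sphere (0 : EuclideanSpace ℝ (Fin (N+1))) 1)
          ((0 : EuclideanSpace ℝ (Fin d)), x)) :
    ∃ ε₀ > 0, ∀ ε : ℝ, 0 < ε → ε ≤ ε₀ → ∀ t ∈ Set.Icc (0:ℝ) 1,
      ∀ z ∈ (ε • V) ×ˢ Metric.sphere (0 : EuclideanSpace ℝ (Fin (N+1))) 1,
        ⟪q (t • z.1) z.2, z.2⟫ + (1 - t) * ε = 0 →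
        ¬ IsCriticalPt
            (fun w : EuclideanSpace ℝ (Fin d) × EuclideanSpace ℝ (Fin (N+1)) =>
              (⟪q (t • w.1) w.2, w.2⟫ + (1 - t) * ε : ℝ))
            ((ε • V) ×ˢ Metric.sphere (0 : EuclideanSpace ℝ (Fin (N+1))) 1) z := by
  classical
  by_contra hcontra
  push_neg at hcontra
  have hseq := fun n : ℕ => hcontra (1/(n+1)) (by positivity)
  choose ε hε0 hεle t ht z hz heq0 hcrit using hseq
  have hz1 : ∀ n, (z n).1 ∈ ε n • V := fun n => (hz n).1
  have hz2 : ∀ n, ‖(z n).2‖ = 1 := fun n => mem_sphere_zero_iff_norm.mp (hz n).2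
  choose w hw hwz0 using fun n => hz1 n
  have hwz : ∀ n, ε n • w n = (z n).1 := hwz0
  -- eigen fact
  have heig : ∀ n, q (t n • (z n).1) (z n).2
      = ⟪q (t n • (z n).1) (z n).2, (z n).2⟫ • (z n).2 := by
    intro n
    have h := crit_eigen q hq hsa (hz1 n) (hz2 n) (t n) ((1 - t n) * ε n) ?_
    · exact h
    · have := hcrit n
      rwa [show ((z n).1, (z n).2) = z n from rfl]
  have hμ : ∀ n, ⟪q (t n • (z n).1) (z n).2, (z n).2⟫ = -((1 - t n) * ε n) := by
    intro n; have := heq0 n; linarith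
  have hdir : ∀ n, ∀ u ∈ V,
      ⟪(fderiv ℝ q (t n • (z n).1)) (t n • (ε n • u - (z n).1)) (z n).2, (z n).2⟫ ≤ 0 := by
    intro n
    exact crit_dir q hq hVconv (hz1 n) (hz2 n) (t n) ((1 - t n) * ε n) (hcrit n)
  -- compactness
  obtain ⟨⟨t₀, w₀, x₀⟩, hmemK, φ, hφ, hconv⟩ :=
    (isCompact_Icc.prod (hVcpt.prod (isCompact_sphere (0 : EuclideanSpace ℝ (Fin (N+1))) 1))).tendsto_subseq
      (x := fun n => (t n, w n, (z n).2)) (fun n => ⟨ht n, hw n, (hz n).2⟩)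
  -- component limits
  have htt : Tendsto (fun n => t (φ n)) atTop (𝓝 t₀) :=
    (continuous_fst.tendsto _).comp hconv
  have hwt : Tendsto (fun n => w (φ n)) atTop (𝓝 w₀) :=
    ((continuous_fst.comp continuous_snd).tendsto _).comp hconv
  have hxt : Tendsto (fun n => (z (φ n)).2) atTop (𝓝 x₀) :=
    ((continuous_snd.comp continuous_snd).tendsto _).comp hconv
  have ht₀ : t₀ ∈ Set.Icc (0:ℝ) 1 := hmemK.1
  have hw₀ : w₀ ∈ V := hmemK.2.1
  have hx₀ : ‖x₀‖ = 1 := mem_sphere_zero_iff_norm.mp hmemK.2.2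
  -- bound on V
  obtain ⟨R, hR⟩ := hVcpt.isBounded.exists_norm_le
  have hR0 : 0 ≤ R := le_trans (norm_nonneg _) (hR 0 hV0)
  -- epsilon tends to zero
  have hεφ0 : Tendsto (fun n => ε (φ n)) atTop (𝓝 0) := by
    apply squeeze_zero (fun n => (hε0 (φ n)).le)
      (fun n => le_trans (hεle (φ n)) ?_) tendsto_one_div_add_atTop_nhds_zero_nat
    have h1 : (n : ℝ) + 1 ≤ (φ n : ℝ) + 1 := by
      have h0 : (n : ℝ) ≤ (φ n : ℝ) := Nat.cast_le.mpr hφ.le_apply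
      linarith
    exact one_div_le_one_div_of_le (by positivity) h1
  set sφ : ℕ → EuclideanSpace ℝ (Fin d) := fun n => (t (φ n) * ε (φ n)) • w (φ n) with hsφdef
  have hsz : ∀ n, t (φ n) • (z (φ n)).1 = sφ n := fun n => by
    rw [hsφdef, ← hwz (φ n), smul_smul]
  have hsnorm : ∀ n, ‖sφ n‖ ≤ R * ε (φ n) := by
    intro n
    rw [hsφdef, norm_smul]
    have h1 := (ht (φ n)).1; have h2 := (ht (φ n)).2
    have h3 := (hε0 (φ n)); have h4 := hR _ (hw (φ n))
    rw [Real.norm_eq_abs, abs_of_nonneg (by positivity)]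
    nlinarith [mul_le_mul_of_nonneg_left h4 h3.le, mul_nonneg h3.le (norm_nonneg (w (φ n))),
      norm_nonneg (w (φ n))]
  have hsφ0 : Tendsto sφ atTop (𝓝 0) := by
    apply squeeze_zero_norm hsnorm
    have := hεφ0.const_mul R
    simpa using this
  have hLs : Tendsto (fun n => fderiv ℝ q (sφ n)) atTop (𝓝 (fderiv ℝ q 0)) :=
    ((hq.continuous_fderiv one_ne_zero).tendsto 0).comp hsφ0
  set L := fderiv ℝ q 0 with hLdef
  -- little-o
  have hdf := ((hq.differentiable one_ne_zero) 0).hasFDerivAt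
  rw [hasFDerivAt_iff_isLittleO_nhds_zero] at hdf
  simp only [zero_add] at hdf
  set e : ℕ → (EuclideanSpace ℝ (Fin (N+1)) →L[ℝ] EuclideanSpace ℝ (Fin (N+1))) :=
    fun n => q (sφ n) - q 0 - L (sφ n) with hedef
  have helo : e =o[atTop] sφ := hdf.comp_tendsto hsφ0
  have hsO : sφ =O[atTop] (fun n => ε (φ n)) := by
    rw [Asymptotics.isBigO_iff]
    exact ⟨R, Eventually.of_forall fun n => by
      rw [Real.norm_eq_abs, abs_of_pos (hε0 _)]; exact hsnorm n⟩
  have heo : e =o[atTop] (fun n => ε (φ n)) := helo.trans_isBigO hsO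
  have her : Tendsto (fun n => ‖e n‖ / ε (φ n)) atTop (𝓝 0) :=
    heo.norm_left.tendsto_div_nhds_zero
  have hen : Tendsto (fun n => ‖e n‖) atTop (𝓝 0) := by
    have h1 := her.mul hεφ0
    rw [show (0:ℝ) = 0 * 0 by ring]
    apply h1.congr
    intro n
    exact div_mul_cancel₀ _ (hε0 (φ n)).ne'
  -- eigenvalue size
  have hqsx : ∀ n, ‖q (sφ n) (z (φ n)).2‖ ≤ ε (φ n) := by
    intro n
    rw [← hsz n, heig (φ n), norm_smul, hμ (φ n), hz2 (φ n), mul_one,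
      Real.norm_eq_abs, abs_neg, abs_of_nonneg (by nlinarith [(ht (φ n)).1, (ht (φ n)).2, hε0 (φ n)])]
    nlinarith [(ht (φ n)).1, (ht (φ n)).2, hε0 (φ n)]
  have hq0b : ∀ n, ‖q 0 (z (φ n)).2‖ ≤ ‖e n‖ + (‖L‖ * R + 1) * ε (φ n) := by
    intro n
    have h1 : q 0 (z (φ n)).2 = q (sφ n) (z (φ n)).2 - (q (sφ n) - q 0) (z (φ n)).2 := by
      simp [ContinuousLinearMap.sub_apply]
    have h2 : ‖(q (sφ n) - q 0) (z (φ n)).2‖ ≤ ‖e n‖ + ‖L‖ * (R * ε (φ n)) := by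
      calc ‖(q (sφ n) - q 0) (z (φ n)).2‖ ≤ ‖q (sφ n) - q 0‖ := by
            have := (q (sφ n) - q 0).le_opNorm (z (φ n)).2
            rwa [hz2 (φ n), mul_one] at this
        _ = ‖e n + L (sφ n)‖ := by simp only [hedef]; congr 1; abel
        _ ≤ ‖e n‖ + ‖L (sφ n)‖ := norm_add_le _ _
        _ ≤ ‖e n‖ + ‖L‖ * (R * ε (φ n)) := by
            have h3 := L.le_opNorm (sφ n)
            have h4 := hsnorm n
            have h5 : ‖L (sφ n)‖ ≤ ‖L‖ * (R * ε (φ n)) :=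
              le_trans h3 (by nlinarith [norm_nonneg L])
            linarith
    rw [h1]
    calc ‖q (sφ n) (z (φ n)).2 - (q (sφ n) - q 0) (z (φ n)).2‖
        ≤ ‖q (sφ n) (z (φ n)).2‖ + ‖(q (sφ n) - q 0) (z (φ n)).2‖ := norm_sub_le _ _
      _ ≤ ε (φ n) + (‖e n‖ + ‖L‖ * (R * ε (φ n))) := add_le_add (hqsx n) h2
      _ ≤ ‖e n‖ + (‖L‖ * R + 1) * ε (φ n) := by nlinarith [hε0 (φ n)]
  have hKb : Tendsto (fun n => ‖e n‖ + (‖L‖ * R + 1) * ε (φ n)) atTop (𝓝 0) := by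
    have := hen.add (hεφ0.const_mul (‖L‖ * R + 1))
    simpa using this
  have hq0x : q 0 x₀ = 0 :=
    tendsto_nhds_unique (((q 0).continuous.tendsto _).comp hxt)
      (squeeze_zero_norm hq0b hKb)
  -- gap estimate
  obtain ⟨C, hCpos, hgap⟩ := gap_lemma (q 0) (hsa 0)
  set K1 : ℝ := ‖L‖ * R + 1 with hK1
  set D : ℕ → ℝ := fun n => ‖e n‖ / ε (φ n) + K1 with hDdef
  have hDlim : Tendsto D atTop (𝓝 K1) := by
    have := her.add (tendsto_const_nhds (x := K1))
    simpa using this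
  have hDε : ∀ n, ‖e n‖ + K1 * ε (φ n) = D n * ε (φ n) := by
    intro n
    have hne := (hε0 (φ n)).ne'
    rw [hDdef]
    field_simp
  have hρ : Tendsto (fun n => ⟪q 0 (z (φ n)).2, (z (φ n)).2⟫ / ε (φ n)) atTop (𝓝 0) := by
    apply squeeze_zero_norm (a := fun n => C * D n ^ 2 * ε (φ n))
    · intro n
      have h1 : |⟪q 0 (z (φ n)).2, (z (φ n)).2⟫| ≤ C * ‖q 0 (z (φ n)).2‖ ^ 2 := hgap _
      have h2 : ‖q 0 (z (φ n)).2‖ ≤ D n * ε (φ n) := by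
        rw [← hDε n]; exact hq0b n
      have h2' : ‖q 0 (z (φ n)).2‖ ^ 2 ≤ (D n * ε (φ n)) ^ 2 :=
        pow_le_pow_left₀ (norm_nonneg _) h2 2
      have h3 : |⟪q 0 (z (φ n)).2, (z (φ n)).2⟫| ≤ C * D n ^ 2 * ε (φ n) * ε (φ n) := by
        calc |⟪q 0 (z (φ n)).2, (z (φ n)).2⟫| ≤ C * ‖q 0 (z (φ n)).2‖ ^ 2 := h1
          _ ≤ C * (D n * ε (φ n)) ^ 2 := mul_le_mul_of_nonneg_left h2' hCpos.le
          _ = C * D n ^ 2 * ε (φ n) * ε (φ n) := by ring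
      rw [Real.norm_eq_abs, abs_div, abs_of_pos (hε0 (φ n)), div_le_iff₀ (hε0 (φ n))]
      exact h3
    · have := (tendsto_const_nhds (x := C)).mul ((hDlim.pow 2).mul hεφ0)
      simp only [mul_zero] at this
      apply this.congr'
      filter_upwards with n
      ring
  -- continuity of evaluation
  have hcont4 : Continuous fun p : (EuclideanSpace ℝ (Fin d) →L[ℝ]
      (EuclideanSpace ℝ (Fin (N+1)) →L[ℝ] EuclideanSpace ℝ (Fin (N+1)))) ×
      EuclideanSpace ℝ (Fin d) × EuclideanSpace ℝ (Fin (N+1)) =>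
      (⟪(p.1 p.2.1) p.2.2, p.2.2⟫ : ℝ) := by
    have h1 : Continuous fun p : (EuclideanSpace ℝ (Fin d) →L[ℝ]
        (EuclideanSpace ℝ (Fin (N+1)) →L[ℝ] EuclideanSpace ℝ (Fin (N+1)))) ×
        EuclideanSpace ℝ (Fin d) × EuclideanSpace ℝ (Fin (N+1)) =>
        (p.1 p.2.1 : EuclideanSpace ℝ (Fin (N+1)) →L[ℝ] EuclideanSpace ℝ (Fin (N+1))) :=
      isBoundedBilinearMap_apply.continuous.comp
        (continuous_fst.prodMk (continuous_fst.comp continuous_snd))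
    have h2 := isBoundedBilinearMap_apply.continuous.comp
        (h1.prodMk (continuous_snd.comp continuous_snd))
    exact continuous_inner.comp (h2.prodMk (continuous_snd.comp continuous_snd))
  -- the key identity
  set A : ℕ → ℝ := fun n => ⟪L (w (φ n)) (z (φ n)).2, (z (φ n)).2⟫ with hAdef
  have hiden : ∀ n, t (φ n) * A n + (1 - t (φ n))
      = -(⟪q 0 (z (φ n)).2, (z (φ n)).2⟫ / ε (φ n)) - ⟪e n (z (φ n)).2, (z (φ n)).2⟫ / ε (φ n) := by
    intro n
    have h1 : ⟪q (sφ n) (z (φ n)).2, (z (φ n)).2⟫ = -((1 - t (φ n)) * ε (φ n)) := by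
      rw [← hsz n]; exact hμ (φ n)
    have h2 : q (sφ n) = e n + q 0 + L (sφ n) := by simp only [hedef]; abel
    have h3 : ⟪L (sφ n) (z (φ n)).2, (z (φ n)).2⟫ = (t (φ n) * ε (φ n)) * A n := by
      rw [hsφdef, hAdef, map_smul, ContinuousLinearMap.smul_apply, real_inner_smul_left]
    have h4 : ⟪q (sφ n) (z (φ n)).2, (z (φ n)).2⟫
        = ⟪e n (z (φ n)).2, (z (φ n)).2⟫ + ⟪q 0 (z (φ n)).2, (z (φ n)).2⟫
          + (t (φ n) * ε (φ n)) * A n := by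
      rw [h2]
      simp only [ContinuousLinearMap.add_apply, inner_add_left]
      rw [h3]
    rw [h4] at h1
    have hεne := (hε0 (φ n)).ne'
    have h5 : -(⟪q 0 (z (φ n)).2, (z (φ n)).2⟫) - ⟪e n (z (φ n)).2, (z (φ n)).2⟫
        = ε (φ n) * (t (φ n) * A n + (1 - t (φ n))) := by linear_combination -h1
    have h6 : -(⟪q 0 (z (φ n)).2, (z (φ n)).2⟫ / ε (φ n))
        - ⟪e n (z (φ n)).2, (z (φ n)).2⟫ / ε (φ n)
        = (-(⟪q 0 (z (φ n)).2, (z (φ n)).2⟫) - ⟪e n (z (φ n)).2, (z (φ n)).2⟫) / ε (φ n) := by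
      ring
    rw [h6, h5, mul_div_cancel_left₀ _ hεne]
  have hee2 : Tendsto (fun n => ⟪e n (z (φ n)).2, (z (φ n)).2⟫ / ε (φ n)) atTop (𝓝 0) := by
    apply squeeze_zero_norm (a := fun n => ‖e n‖ / ε (φ n)) _ her
    intro n
    have hp := hε0 (φ n)
    rw [Real.norm_eq_abs, abs_div, abs_of_pos hp]
    have hnum : |⟪e n (z (φ n)).2, (z (φ n)).2⟫| ≤ ‖e n‖ := by
      calc |⟪e n (z (φ n)).2, (z (φ n)).2⟫| ≤ ‖e n (z (φ n)).2‖ * ‖(z (φ n)).2‖ :=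
            abs_real_inner_le_norm _ _
        _ ≤ ‖e n‖ := by
            have h7 := (e n).le_opNorm (z (φ n)).2
            rw [hz2 (φ n), mul_one] at h7 ⊢
            exact h7
    exact (div_le_div_iff_of_pos_right hp).mpr hnum
  have hAlim : Tendsto A atTop (𝓝 (⟪L w₀ x₀, x₀⟫ : ℝ)) := by
    have htriple : Tendsto (fun n => (L, w (φ n), (z (φ n)).2)) atTop (𝓝 (L, w₀, x₀)) :=
      tendsto_const_nhds.prodMk_nhds (hwt.prodMk_nhds hxt)
    have h8 := (hcont4.tendsto (L, w₀, x₀)).comp htriple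
    simp only [Function.comp] at h8
    exact h8
  have hkey : t₀ * ⟪L w₀ x₀, x₀⟫ + (1 - t₀) = 0 := by
    apply tendsto_nhds_unique ((htt.mul hAlim).add (tendsto_const_nhds.sub htt))
    have h0 : Tendsto (fun n => -(⟪q 0 (z (φ n)).2, (z (φ n)).2⟫ / ε (φ n))
        - ⟪e n (z (φ n)).2, (z (φ n)).2⟫ / ε (φ n)) atTop (𝓝 0) := by
      have := (hρ.neg).sub hee2
      simpa using this
    exact Tendsto.congr (fun n => (hiden n).symm) h0
  -- t₀ positive
  have ht₀pos : 0 < t₀ := by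
    rcases lt_or_eq_of_le ht₀.1 with h | h
    · exact h
    · exfalso; rw [← h] at hkey; norm_num at hkey
  have hA₀ : (⟪L w₀ x₀, x₀⟫ : ℝ) ≤ 0 := by nlinarith [ht₀.2]
  -- direction inequalities in the limit
  have hle : ∀ u ∈ V, (⟪L u x₀, x₀⟫ : ℝ) ≤ 0 := by
    intro u hu
    have hseq : ∀ n, t (φ n) * ⟪(fderiv ℝ q (sφ n)) (u - w (φ n)) (z (φ n)).2, (z (φ n)).2⟫ ≤ 0 := by
      intro n
      have h1 := hdir (φ n) u hu
      have h2 : t (φ n) • (ε (φ n) • u - (z (φ n)).1)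
          = (t (φ n) * ε (φ n)) • (u - w (φ n)) := by
        rw [← hwz (φ n), ← smul_sub, smul_smul]
      rw [h2, hsz n, map_smul, ContinuousLinearMap.smul_apply, real_inner_smul_left] at h1
      have hεpos := hε0 (φ n)
      nlinarith [h1]
    have hlim : Tendsto (fun n => t (φ n) *
        ⟪(fderiv ℝ q (sφ n)) (u - w (φ n)) (z (φ n)).2, (z (φ n)).2⟫) atTop
        (𝓝 (t₀ * ⟪L (u - w₀) x₀, x₀⟫)) := by
      apply htt.mul
      have htriple : Tendsto (fun n => (fderiv ℝ q (sφ n), u - w (φ n), (z (φ n)).2)) atTop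
          (𝓝 (L, u - w₀, x₀)) :=
        hLs.prodMk_nhds ((tendsto_const_nhds.sub hwt).prodMk_nhds hxt)
      have h8 := (hcont4.tendsto (L, u - w₀, x₀)).comp htriple
      simp only [Function.comp] at h8
      exact h8
    have h3 : t₀ * ⟪L (u - w₀) x₀, x₀⟫ ≤ 0 :=
      le_of_tendsto hlim (Eventually.of_forall hseq)
    have h4 : (⟪L (u - w₀) x₀, x₀⟫ : ℝ) = ⟪L u x₀, x₀⟫ - ⟪L w₀ x₀, x₀⟫ := by
      rw [map_sub, ContinuousLinearMap.sub_apply, inner_sub_left]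
    rw [h4] at h3
    nlinarith [hA₀]
  exact hreg x₀ hx₀ (by rw [hq0x]; simp)
    (crit_at_zero q hq hsa x₀ hx₀ hq0x hle)
end

section
/- Let φ : M → ℝ^{k+1} be a C¹ map and φ*(p,x) = ⟨p, φ(x)⟩ its Lagrange function on S^k × M. Then 0 is a critical value of φ if and only if 0 is a critical value of φ*. Explicitly: there exists x ∈ M with φ(x) = 0 at which the differential D_xφ : T_xM → ℝ^{k+1} is not surjective if and only if there exists (p,x) ∈ S^k × M with φ*(p,x) = 0 at which the differential of φ* vanishes. -/
open scoped Manifold RealInnerProductSpace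

notation "𝕊" k => Metric.sphere (0 : EuclideanSpace ℝ (Fin (k+1))) 1

/-- The differential of the sphere inclusion, seen as a map into the ambient space. -/
noncomputable def Dcoe (k : ℕ) (p : 𝕊 k) :
    EuclideanSpace ℝ (Fin k) →L[ℝ] EuclideanSpace ℝ (Fin (k+1)) :=
  mfderiv (𝓡 k) 𝓘(ℝ, EuclideanSpace ℝ (Fin (k+1)))
    ((↑) : (𝕊 k) → EuclideanSpace ℝ (Fin (k+1))) p

/-- The differential of `φ`, seen as a map into the ambient space. -/
noncomputable def Dphi {k m : ℕ} {M : Type*} [TopologicalSpace M]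
    [ChartedSpace (EuclideanSpace ℝ (Fin m)) M]
    (φ : M → EuclideanSpace ℝ (Fin (k+1))) (x : M) :
    EuclideanSpace ℝ (Fin m) →L[ℝ] EuclideanSpace ℝ (Fin (k+1)) :=
  mfderiv (𝓡 m) 𝓘(ℝ, EuclideanSpace ℝ (Fin (k+1))) φ x

section Aux

variable {k m : ℕ} {M : Type*} [TopologicalSpace M]
    [ChartedSpace (EuclideanSpace ℝ (Fin m)) M]
    [IsManifold (𝓡 m) (⊤ : ℕ∞) M]

set_option linter.unusedSectionVars false in
/-- Computation of the differential of the Lagrange function. -/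
lemma statement9_aux (φ : M → EuclideanSpace ℝ (Fin (k+1)))
    (hφ : ContMDiff (𝓡 m) 𝓘(ℝ, EuclideanSpace ℝ (Fin (k+1))) 1 φ)
    (z : (𝕊 k) × M) (t : EuclideanSpace ℝ (Fin k) × EuclideanSpace ℝ (Fin m)) :
    mfderiv ((𝓡 k).prod (𝓡 m)) 𝓘(ℝ, ℝ)
      (fun w : (𝕊 k) × M => ⟪(w.1 : EuclideanSpace ℝ (Fin (k+1))), φ w.2⟫) z t
    = ⟪Dcoe k z.1 t.1, φ z.2⟫ + ⟪(z.1 : EuclideanSpace ℝ (Fin (k+1))), Dphi (m := m) φ z.2 t.2⟫ := by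
  haveI : Fact (Module.finrank ℝ (EuclideanSpace ℝ (Fin (k+1))) = k + 1) :=
    Fact.mk finrank_euclideanSpace_fin
  have h1 : ContMDiff ((𝓡 k).prod (𝓡 m)) 𝓘(ℝ, EuclideanSpace ℝ (Fin (k+1))) 1
      (fun w : (𝕊 k) × M => (w.1 : EuclideanSpace ℝ (Fin (k+1)))) :=
    (contMDiff_coe_sphere.of_le le_top).comp contMDiff_fst
  have h2 : ContMDiff ((𝓡 k).prod (𝓡 m)) 𝓘(ℝ, EuclideanSpace ℝ (Fin (k+1))) 1
      (fun w : (𝕊 k) × M => φ w.2) := hφ.comp contMDiff_snd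
  have hF : ContMDiff ((𝓡 k).prod (𝓡 m))
      𝓘(ℝ, (EuclideanSpace ℝ (Fin (k+1))) × (EuclideanSpace ℝ (Fin (k+1)))) 1
      (fun w : (𝕊 k) × M => ((w.1 : EuclideanSpace ℝ (Fin (k+1))), φ w.2)) :=
    (contMDiff_prod_module_iff _).2 ⟨h1, h2⟩
  have hg : ContMDiff ((𝓡 k).prod (𝓡 m)) 𝓘(ℝ, ℝ) 1
      (fun w : (𝕊 k) × M => ⟪(w.1 : EuclideanSpace ℝ (Fin (k+1))), φ w.2⟫) :=
    ((contDiff_inner (𝕜 := ℝ) (n := 1)).contMDiff).comp hF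
  have hgd := (hg z).mdifferentiableAt one_ne_zero
  rw [mfderiv_prod_eq_add_apply (v := t) hgd]
  congr 1
  · -- partial derivative in the sphere variable
    have e1 : (fun q : 𝕊 k => ⟪(q : EuclideanSpace ℝ (Fin (k+1))), φ z.2⟫)
        = (innerSL ℝ (φ z.2) : EuclideanSpace ℝ (Fin (k+1)) → ℝ)
            ∘ ((↑) : (𝕊 k) → EuclideanSpace ℝ (Fin (k+1))) := by
      funext q
      exact real_inner_comm _ _
    rw [e1, mfderiv_comp z.1
      ((innerSL ℝ (φ z.2)).differentiableAt.mdifferentiableAt)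
      ((contMDiff_coe_sphere (m := 1) z.1).mdifferentiableAt one_ne_zero)]
    have e2 : mfderiv 𝓘(ℝ, EuclideanSpace ℝ (Fin (k+1))) 𝓘(ℝ, ℝ)
        (innerSL ℝ (φ z.2) : EuclideanSpace ℝ (Fin (k+1)) → ℝ) ((z.1 : 𝕊 k) : _)
        = innerSL ℝ (φ z.2) := by
      rw [mfderiv_eq_fderiv, ContinuousLinearMap.fderiv]
    rw [e2]
    show ⟪φ z.2, Dcoe k z.1 t.1⟫ = ⟪Dcoe k z.1 t.1, φ z.2⟫
    exact real_inner_comm _ _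
  · -- partial derivative in the `M` variable
    have e1 : (fun y : M => ⟪((z.1 : 𝕊 k) : EuclideanSpace ℝ (Fin (k+1))), φ y⟫)
        = (innerSL ℝ ((z.1 : 𝕊 k) : EuclideanSpace ℝ (Fin (k+1))) :
            EuclideanSpace ℝ (Fin (k+1)) → ℝ) ∘ φ := rfl
    rw [e1, mfderiv_comp z.2
      ((innerSL ℝ ((z.1 : 𝕊 k) : EuclideanSpace ℝ (Fin (k+1)))).differentiableAt.mdifferentiableAt)
      ((hφ z.2).mdifferentiableAt one_ne_zero)]
    have e2 : mfderiv 𝓘(ℝ, EuclideanSpace ℝ (Fin (k+1))) 𝓘(ℝ, ℝ)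
        (innerSL ℝ ((z.1 : 𝕊 k) : EuclideanSpace ℝ (Fin (k+1))) :
          EuclideanSpace ℝ (Fin (k+1)) → ℝ) (φ z.2)
        = innerSL ℝ ((z.1 : 𝕊 k) : EuclideanSpace ℝ (Fin (k+1))) := by
      rw [mfderiv_eq_fderiv, ContinuousLinearMap.fderiv]
    rw [e2]
    rfl

end Aux

/-- `0` is a critical value of a `C¹` map `φ : M → ℝ^{k+1}` if and only if `0` is a
critical value of its Lagrange function `φ* : S^k × M → ℝ`, `φ*(p,x) = ⟨p, φ(x)⟩`. -/
theorem statement9 {k m : ℕ} {M : Type*} [TopologicalSpace M]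
    [ChartedSpace (EuclideanSpace ℝ (Fin m)) M]
    [IsManifold (𝓡 m) (⊤ : ℕ∞) M] [CompactSpace M]
    (φ : M → EuclideanSpace ℝ (Fin (k+1)))
    (hφ : ContMDiff (𝓡 m) 𝓘(ℝ, EuclideanSpace ℝ (Fin (k+1))) 1 φ) :
    (∃ x : M, φ x = 0 ∧
        ¬ Function.Surjective (mfderiv (𝓡 m) 𝓘(ℝ, EuclideanSpace ℝ (Fin (k+1))) φ x)) ↔
      (∃ z : (𝕊 k) × M,
        ⟪(z.1 : EuclideanSpace ℝ (Fin (k+1))), φ z.2⟫ = 0 ∧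
        mfderiv ((𝓡 k).prod (𝓡 m)) 𝓘(ℝ, ℝ)
          (fun w : (𝕊 k) × M => ⟪(w.1 : EuclideanSpace ℝ (Fin (k+1))), φ w.2⟫) z = 0) := by
  haveI : Fact (Module.finrank ℝ (EuclideanSpace ℝ (Fin (k+1))) = k + 1) :=
    Fact.mk finrank_euclideanSpace_fin
  constructor
  · rintro ⟨x, hx, hsurj⟩
    have hsurj' : ¬ Function.Surjective (Dphi (m := m) φ x) := hsurj
    have hr : LinearMap.range (Dphi (m := m) φ x : EuclideanSpace ℝ (Fin m) →ₗ[ℝ] EuclideanSpace ℝ (Fin (k+1))) ≠ ⊤ := by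
      rw [Ne, LinearMap.range_eq_top]
      exact hsurj'
    have hbot : (LinearMap.range (Dphi (m := m) φ x : EuclideanSpace ℝ (Fin m) →ₗ[ℝ] EuclideanSpace ℝ (Fin (k+1))))ᗮ ≠ ⊥ := by
      rw [Ne, Submodule.orthogonal_eq_bot_iff]
      exact hr
    obtain ⟨p0, hp0mem, hp0⟩ := Submodule.exists_mem_ne_zero_of_ne_bot hbot
    have hpmem : ‖p0‖⁻¹ • p0 ∈ (LinearMap.range (Dphi (m := m) φ x : EuclideanSpace ℝ (Fin m) →ₗ[ℝ] EuclideanSpace ℝ (Fin (k+1))))ᗮ :=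
      Submodule.smul_mem _ _ hp0mem
    have hpnorm : ‖‖p0‖⁻¹ • p0‖ = 1 := by
      rw [norm_smul, norm_inv, norm_norm, inv_mul_cancel₀ (norm_ne_zero_iff.mpr hp0)]
    have hpz : ∀ w : EuclideanSpace ℝ (Fin m), ⟪‖p0‖⁻¹ • p0, Dphi (m := m) φ x w⟫ = 0 := by
      intro w
      rw [real_inner_comm]
      exact hpmem (Dphi (m := m) φ x w) (LinearMap.mem_range_self _ w)
    refine ⟨(⟨‖p0‖⁻¹ • p0, by simp [mem_sphere_zero_iff_norm, hpnorm]⟩, x), ?_, ?_⟩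
    · simp [hx]
    · apply ContinuousLinearMap.ext
      intro t
      rw [statement9_aux φ hφ _ t]
      simp only [hx, inner_zero_right, zero_add, ContinuousLinearMap.zero_apply]
      exact hpz t.2
  · rintro ⟨⟨p, x⟩, h0, hcrit⟩
    simp only at h0
    have hpnorm : ‖(p : EuclideanSpace ℝ (Fin (k+1)))‖ = 1 := norm_eq_of_mem_sphere p
    have key : ∀ t : EuclideanSpace ℝ (Fin k) × EuclideanSpace ℝ (Fin m),
        ⟪Dcoe k p t.1, φ x⟫
          + ⟪(p : EuclideanSpace ℝ (Fin (k+1))), Dphi (m := m) φ x t.2⟫ = 0 := by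
      intro t
      have h := statement9_aux φ hφ (p, x) t
      rw [hcrit] at h
      exact h.symm
    have hM : ∀ w : EuclideanSpace ℝ (Fin m),
        ⟪(p : EuclideanSpace ℝ (Fin (k+1))), Dphi (m := m) φ x w⟫ = 0 := by
      intro w
      have h := key (0, w)
      simpa using h
    have hS : ∀ v : EuclideanSpace ℝ (Fin k), ⟪Dcoe k p v, φ x⟫ = 0 := by
      intro v
      have h := key (v, 0)
      simpa using h
    -- `φ x = 0`
    have hmem : φ x ∈ ((ℝ ∙ (p : EuclideanSpace ℝ (Fin (k+1))))ᗮ)ᗮ := by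
      rw [Submodule.mem_orthogonal]
      intro u hu
      rw [← range_mfderiv_coe_sphere (n := k) p] at hu
      obtain ⟨v, rfl⟩ := hu
      exact hS v
    rw [Submodule.orthogonal_orthogonal, Submodule.mem_span_singleton] at hmem
    obtain ⟨c, hc⟩ := hmem
    have hc0 : c = 0 := by
      have h := h0
      rw [← hc, real_inner_smul_right, real_inner_self_eq_norm_sq, hpnorm] at h
      simpa using h
    have hφx : φ x = 0 := by rw [← hc, hc0, zero_smul]
    refine ⟨x, hφx, ?_⟩
    intro hs
    have hs' : Function.Surjective (Dphi (m := m) φ x) := hs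
    obtain ⟨w, hw⟩ := hs' (p : EuclideanSpace ℝ (Fin (k+1)))
    have h := hM w
    rw [hw, real_inner_self_eq_norm_sq, hpnorm] at h
    norm_num at h
end

section
/- Let φ : M → ℝ^{k+1} be continuous and B_φ = {(p,x) ∈ S^k × M : ⟨p, φ(x)⟩ > 0}. Then the projection (p,x) ↦ x maps B_φ onto M \ φ⁻¹(0), its fibers are open hemispheres of S^k, and this projection is a homotopy equivalence between B_φ and M \ φ⁻¹(0). -/
open scoped Manifold RealInnerProductSpace

private lemma aux_norm_normalized {n : ℕ} (y : EuclideanSpace ℝ (Fin n)) (hy : y ≠ 0) :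
    ‖‖y‖⁻¹ • y‖ = 1 := by
  rw [norm_smul, norm_inv, norm_norm, inv_mul_cancel₀ (norm_ne_zero_iff.2 hy)]

private lemma aux_inner_normalized_pos {n : ℕ} (y : EuclideanSpace ℝ (Fin n)) (hy : y ≠ 0) :
    0 < ⟪‖y‖⁻¹ • y, y⟫ := by
  rw [real_inner_smul_left, real_inner_self_eq_norm_sq]
  have h : 0 < ‖y‖ := norm_pos_iff.2 hy
  positivity

/-- for continuous `φ : M → ℝ^{k+1}` and
`B_φ = {(p,x) ∈ S^k × M : ⟨p, φ(x)⟩ > 0}`, the projection `(p,x) ↦ x` maps `B_φ` onto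
`M \ φ⁻¹(0)`, its fibers are open hemispheres of `S^k`, and it is a homotopy equivalence
between `B_φ` and `M \ φ⁻¹(0)`. -/
theorem statement10 {k m : ℕ} {M : Type*} [TopologicalSpace M]
    [ChartedSpace (EuclideanSpace ℝ (Fin m)) M]
    [IsManifold (𝓡 m) (⊤ : ℕ∞) M] [CompactSpace M]
    (φ : M → EuclideanSpace ℝ (Fin (k+1))) (hφ : Continuous φ)
    (B : Set ((𝕊 k) × M))
    (hB : B = {z : (𝕊 k) × M | 0 < ⟪(z.1 : EuclideanSpace ℝ (Fin (k+1))), φ z.2⟫}) :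
    (Prod.snd '' B = {x : M | φ x ≠ 0}) ∧
    (∀ x : M, φ x ≠ 0 →
      {p : (𝕊 k) | (p, x) ∈ B}
        = {p : (𝕊 k) | 0 < ⟪(p : EuclideanSpace ℝ (Fin (k+1))), φ x⟫}) ∧
    (∃ e : ContinuousMap.HomotopyEquiv B {x : M // φ x ≠ 0},
      ∀ z : B, (e.toFun z : M) = (z : (𝕊 k) × M).2) := by
  have key : ∀ z : (𝕊 k) × M,
      0 < ⟪((z.1 : EuclideanSpace ℝ (Fin (k+1)))), φ z.2⟫ → φ z.2 ≠ 0 := by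
    intro z hz h0
    rw [h0, inner_zero_right] at hz
    exact lt_irrefl 0 hz
  subst hB
  set S : Set ((𝕊 k) × M) :=
    {z : (𝕊 k) × M | 0 < ⟪(z.1 : EuclideanSpace ℝ (Fin (k+1))), φ z.2⟫} with hS
  refine ⟨?_, ?_, ?_⟩
  · ext x
    simp only [Set.mem_image, Set.mem_setOf_eq]
    constructor
    · rintro ⟨z, hz, rfl⟩
      exact key z hz
    · intro hx
      refine ⟨(⟨‖φ x‖⁻¹ • φ x, ?_⟩, x), ?_, rfl⟩
      · rw [mem_sphere_zero_iff_norm]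
        exact aux_norm_normalized _ hx
      · exact aux_inner_normalized_pos _ hx
  · intro x hx
    rfl
  · -- the homotopy equivalence
    have hφS : ∀ z : S, φ (z : (𝕊 k) × M).2 ≠ 0 := fun z => key _ z.2
    -- forward map
    let f : C(S, {x : M // φ x ≠ 0}) :=
      ⟨fun z => ⟨(z : (𝕊 k) × M).2, hφS z⟩,
        (continuous_snd.comp continuous_subtype_val).subtype_mk _⟩
    -- backward map
    have hnorm : ∀ x : {x : M // φ x ≠ 0},
        (‖φ x.1‖⁻¹ • φ x.1) ∈ (𝕊 k) := by
      intro x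
      rw [mem_sphere_zero_iff_norm]
      exact aux_norm_normalized _ x.2
    have gcont : Continuous fun x : {x : M // φ x ≠ 0} =>
        ((⟨‖φ x.1‖⁻¹ • φ x.1, hnorm x⟩ : (𝕊 k)), x.1) := by
      have h1 : Continuous fun x : {x : M // φ x ≠ 0} => φ x.1 :=
        hφ.comp continuous_subtype_val
      have h2 : Continuous fun x : {x : M // φ x ≠ 0} => ‖φ x.1‖⁻¹ :=
        h1.norm.inv₀ fun x => norm_ne_zero_iff.2 x.2
      exact ((h2.smul h1).subtype_mk _).prodMk continuous_subtype_val
    let g : C({x : M // φ x ≠ 0}, S) :=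
      ⟨fun x => ⟨(⟨‖φ x.1‖⁻¹ • φ x.1, hnorm x⟩, x.1),
        aux_inner_normalized_pos _ x.2⟩, gcont.subtype_mk _⟩
    -- the straight-line (normalized) homotopy from id to g ∘ f on S
    let w : unitInterval × S → EuclideanSpace ℝ (Fin (k+1)) := fun q =>
      (1 - (q.1 : ℝ)) • ((q.2 : (𝕊 k) × M).1 : EuclideanSpace ℝ (Fin (k+1)))
        + (q.1 : ℝ) • (‖φ (q.2 : (𝕊 k) × M).2‖⁻¹ • φ (q.2 : (𝕊 k) × M).2)
    have hwpos : ∀ q : unitInterval × S, 0 < ⟪w q, φ (q.2 : (𝕊 k) × M).2⟫ := by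
      rintro ⟨t, z⟩
      have hz := z.2
      have hx : φ (z : (𝕊 k) × M).2 ≠ 0 := key _ hz
      have hb : (0:ℝ) < ‖φ (z : (𝕊 k) × M).2‖⁻¹ *
          ⟪φ (z : (𝕊 k) × M).2, φ (z : (𝕊 k) × M).2⟫ := by
        have := aux_inner_normalized_pos _ hx
        rwa [real_inner_smul_left] at this
      show 0 < ⟪(1 - (t : ℝ)) • ((z : (𝕊 k) × M).1 : EuclideanSpace ℝ (Fin (k+1)))
        + (t : ℝ) • (‖φ (z : (𝕊 k) × M).2‖⁻¹ • φ (z : (𝕊 k) × M).2), φ (z : (𝕊 k) × M).2⟫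
      rw [inner_add_left, real_inner_smul_left, real_inner_smul_left, real_inner_smul_left]
      rcases lt_or_eq_of_le t.2.2 with ht1 | ht1
      · have h1 : 0 < (1 - (t : ℝ)) * ⟪((z : (𝕊 k) × M).1 :
            EuclideanSpace ℝ (Fin (k+1))), φ (z : (𝕊 k) × M).2⟫ :=
          mul_pos (by linarith) hz
        have h2 : 0 ≤ (t : ℝ) * (‖φ (z : (𝕊 k) × M).2‖⁻¹ *
            ⟪φ (z : (𝕊 k) × M).2, φ (z : (𝕊 k) × M).2⟫) := mul_nonneg t.2.1 hb.le
        linarith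
      · have h2 : 0 < (t : ℝ) * (‖φ (z : (𝕊 k) × M).2‖⁻¹ *
            ⟪φ (z : (𝕊 k) × M).2, φ (z : (𝕊 k) × M).2⟫) :=
          mul_pos (by rw [ht1]; norm_num) hb
        have h1 : 0 ≤ (1 - (t : ℝ)) * ⟪((z : (𝕊 k) × M).1 :
            EuclideanSpace ℝ (Fin (k+1))), φ (z : (𝕊 k) × M).2⟫ :=
          mul_nonneg (by rw [ht1]; norm_num) hz.le
        linarith
    have hwne : ∀ q : unitInterval × S, w q ≠ 0 := by
      intro q h0
      have := hwpos q
      rw [h0, inner_zero_left] at this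
      exact lt_irrefl 0 this
    have hwcont : Continuous w := by
      have hc1 : Continuous fun q : unitInterval × S => φ (q.2 : (𝕊 k) × M).2 :=
        hφ.comp (continuous_snd.comp (continuous_subtype_val.comp continuous_snd))
      have hc2 : Continuous fun q : unitInterval × S => ‖φ (q.2 : (𝕊 k) × M).2‖⁻¹ :=
        hc1.norm.inv₀ fun q => norm_ne_zero_iff.2 (key _ q.2.2)
      have hct : Continuous fun q : unitInterval × S => (q.1 : ℝ) :=
        continuous_subtype_val.comp continuous_fst
      exact ((continuous_const.sub hct).smul
        ((continuous_subtype_val.comp (continuous_fst.comp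
          (continuous_subtype_val.comp continuous_snd))))).add
        (hct.smul (hc2.smul hc1))
    have hmemS : ∀ q : unitInterval × S,
        ((⟨‖w q‖⁻¹ • w q, by
            rw [mem_sphere_zero_iff_norm]; exact aux_norm_normalized _ (hwne q)⟩ : (𝕊 k)),
          (q.2 : (𝕊 k) × M).2) ∈ S := by
      intro q
      have : 0 < ⟪‖w q‖⁻¹ • w q, φ (q.2 : (𝕊 k) × M).2⟫ := by
        rw [real_inner_smul_left]
        exact mul_pos (inv_pos.2 (norm_pos_iff.2 (hwne q))) (hwpos q)
      exact this
    have Hcont : Continuous fun q : unitInterval × S =>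
        (⟨((⟨‖w q‖⁻¹ • w q, by
            rw [mem_sphere_zero_iff_norm]; exact aux_norm_normalized _ (hwne q)⟩ : (𝕊 k)),
          (q.2 : (𝕊 k) × M).2), hmemS q⟩ : S) := by
      have h2 : Continuous fun q : unitInterval × S => ‖w q‖⁻¹ :=
        hwcont.norm.inv₀ fun q => norm_ne_zero_iff.2 (hwne q)
      exact ((((h2.smul hwcont).subtype_mk _).prodMk
        (continuous_snd.comp (continuous_subtype_val.comp continuous_snd))).subtype_mk _)
    let Hmap : C(unitInterval × S, S) :=
      ⟨fun q =>
        (⟨((⟨‖w q‖⁻¹ • w q, by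
            rw [mem_sphere_zero_iff_norm]; exact aux_norm_normalized _ (hwne q)⟩ : (𝕊 k)),
          (q.2 : (𝕊 k) × M).2), hmemS q⟩ : S), Hcont⟩
    let H : ContinuousMap.Homotopy (ContinuousMap.id S) (g.comp f) :=
      { toContinuousMap := Hmap
        map_zero_left := by
          intro z
          apply Subtype.ext
          apply Prod.ext
          · apply Subtype.ext
            show ‖w (0, z)‖⁻¹ • w (0, z) = _
            have hw0 : w (0, z) = ((z : (𝕊 k) × M).1 : EuclideanSpace ℝ (Fin (k+1))) := by
              simp [w]
            rw [hw0]
            have h1 : ‖((z : (𝕊 k) × M).1 : EuclideanSpace ℝ (Fin (k+1)))‖ = 1 :=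
              mem_sphere_zero_iff_norm.1 (z : (𝕊 k) × M).1.2
            rw [h1]
            simp
          · rfl
        map_one_left := by
          intro z
          apply Subtype.ext
          apply Prod.ext
          · apply Subtype.ext
            show ‖w (1, z)‖⁻¹ • w (1, z) = _
            have hx : φ (z : (𝕊 k) × M).2 ≠ 0 := key _ z.2
            have hw1 : w (1, z) = ‖φ (z : (𝕊 k) × M).2‖⁻¹ • φ (z : (𝕊 k) × M).2 := by
              simp [w]
            rw [hw1, aux_norm_normalized _ hx, inv_one, one_smul]
            rfl
          · rfl }
    have hfg : f.comp g = ContinuousMap.id _ := by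
      ext x
      rfl
    exact ⟨⟨f, g, ⟨H.symm⟩, hfg ▸ ContinuousMap.Homotopic.refl _⟩, fun z => rfl⟩
end

section
/- Let φ : M → ℝ^{k+1} be a C¹ map, B^{k+1} = {p ∈ ℝ^{k+1} : |p| ≤ 1} the closed unit ball, and g : B^{k+1} × M → ℝ, g(p,x) = ⟨p, φ(x)⟩. Then g has a critical point (in the tangent-cone sense) at level 0 if and only if φ⁻¹(0) ≠ ∅. Moreover, for every constant c > 0 the function (p,x) ↦ c + ⟨p, φ(x)⟩ on B^{k+1} × M has no critical point at level 0. -/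
open scoped Manifold RealInnerProductSpace

/-- The tangent cone of a subset `V` of a manifold `X` at a point `z`: the closure of the set of
velocities at `z` of smooth (C¹) curves starting from `z` and contained in `V` (near time `0`). -/
def mTangentCone {E H : Type*} [NormedAddCommGroup E] [NormedSpace ℝ E]
    [TopologicalSpace H] (I : ModelWithCorners ℝ E H)
    {X : Type*} [TopologicalSpace X] [ChartedSpace H X]
    (V : Set X) (z : X) : Set (TangentSpace I z) :=
  closure {ξ : TangentSpace I z |
    ∃ γ : ℝ → X, γ 0 = z ∧ ContMDiff 𝓘(ℝ, ℝ) I 1 γ ∧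
      (∃ ε > 0, ∀ t ∈ Set.Icc (0:ℝ) ε, γ t ∈ V) ∧
      mfderiv 𝓘(ℝ, ℝ) I γ 0 (1 : ℝ) = ξ}

/-- `z` is a critical point of the `C¹` function `g` on the subset `V` (in the tangent-cone
sense) if `⟨d_z g, ξ⟩ ≤ 0` for every `ξ` in the tangent cone of `V` at `z`. -/
def IsMCriticalPt {E H : Type*} [NormedAddCommGroup E] [NormedSpace ℝ E]
    [TopologicalSpace H] (I : ModelWithCorners ℝ E H)
    {X : Type*} [TopologicalSpace X] [ChartedSpace H X]
    (g : X → ℝ) (V : Set X) (z : X) : Prop :=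
  ∀ ξ ∈ mTangentCone I V z, LE.le (α := ℝ) (mfderiv I 𝓘(ℝ, ℝ) g z ξ) 0

/-- The curve `t ↦ (1-t) • (p + t • v)` stays in the closed unit ball for small `t ≥ 0`,
provided `‖p‖ ≤ 1` and `⟪p, v⟫ ≤ 0`. -/
lemma aux_ball_mem {E : Type*} [NormedAddCommGroup E] [InnerProductSpace ℝ E]
    {p v : E} (hp : ‖p‖ ≤ 1) (hpv : ⟪p, v⟫ ≤ 0) :
    ∃ ε > 0, ∀ t ∈ Set.Icc (0:ℝ) ε, ‖(1 - t) • (p + t • v)‖ ≤ 1 := by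
  refine ⟨min 1 (1 / (1 + 2 * ‖v‖ ^ 2)), lt_min one_pos (by positivity), fun t ht => ?_⟩
  obtain ⟨ht0, ht1⟩ := ht
  have htle1 : t ≤ 1 := le_trans ht1 (min_le_left _ _)
  have htle2 : t * (1 + 2 * ‖v‖ ^ 2) ≤ 1 := by
    have h := le_trans ht1 (min_le_right _ _)
    rw [le_div_iff₀ (by positivity)] at h
    linarith
  have hsq : ‖p + t • v‖ ^ 2 ≤ 1 + ‖v‖ ^ 2 * t ^ 2 := by
    rw [norm_add_sq_real, real_inner_smul_right, norm_smul, mul_pow]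
    have h1 : ‖p‖ ^ 2 ≤ 1 := by nlinarith [norm_nonneg p]
    have h2 : t * ⟪p, v⟫ ≤ 0 := mul_nonpos_of_nonneg_of_nonpos ht0 hpv
    have h3 : ‖t‖ ^ 2 = t ^ 2 := by rw [Real.norm_eq_abs, sq_abs]
    nlinarith
  have hkey : ∀ c : ℝ, 0 ≤ c → t * (1 + 2 * c) ≤ 1 → (1 - t)^2 * (1 + c * t^2) ≤ 1 := by
    intro c hc h
    nlinarith [mul_nonneg (mul_nonneg hc ht0) ht0, mul_nonneg hc (sq_nonneg t),
      mul_nonneg (mul_nonneg hc ht0) (sq_nonneg (1-t)), sq_nonneg t, sq_nonneg (1-t),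
      mul_nonneg ht0 (sub_nonneg.mpr htle1),
      mul_nonneg (mul_nonneg hc (sq_nonneg t)) (sub_nonneg.mpr htle1)]
  have hnorm : ‖(1 - t) • (p + t • v)‖ ^ 2 ≤ 1 := by
    rw [norm_smul, mul_pow, Real.norm_eq_abs, sq_abs]
    have h4 := hkey (‖v‖ ^ 2) (by positivity) htle2
    nlinarith [sq_nonneg (1 - t), norm_nonneg (p + t • v)]
  nlinarith [norm_nonneg ((1 - t) • (p + t • v))]

/-- Key lemma: if `z = (p, x)` with `‖p‖ ≤ 1` and `⟪p, φ x⟫ ≤ 0` is a critical point of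
`w ↦ a + ⟪w.1, φ w.2⟫` on the ball times `M`, then `‖φ x‖² ≤ ⟪p, φ x⟫`. -/
lemma aux_key {k m : ℕ} {M : Type*} [TopologicalSpace M]
    [ChartedSpace (EuclideanSpace ℝ (Fin m)) M]
    [IsManifold (𝓡 m) (⊤ : ℕ∞) M]
    (φ : M → EuclideanSpace ℝ (Fin (k+1)))
    (hφ : ContMDiff (𝓡 m) 𝓘(ℝ, EuclideanSpace ℝ (Fin (k+1))) 1 φ)
    (a : ℝ) (z : EuclideanSpace ℝ (Fin (k+1)) × M)
    (hz : ‖z.1‖ ≤ 1) (hpv : ⟪z.1, φ z.2⟫ ≤ 0)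
    (hcrit : IsMCriticalPt (𝓘(ℝ, EuclideanSpace ℝ (Fin (k+1))).prod (𝓡 m))
      (fun w : EuclideanSpace ℝ (Fin (k+1)) × M => (a + ⟪w.1, φ w.2⟫ : ℝ))
      ((Metric.closedBall (0 : EuclideanSpace ℝ (Fin (k+1))) 1) ×ˢ Set.univ) z) :
    ‖φ z.2‖ ^ 2 ≤ ⟪z.1, φ z.2⟫ := by
  obtain ⟨p, x⟩ := z
  simp only at hz hpv ⊢
  obtain ⟨ε, hε, hball⟩ := aux_ball_mem (v := φ x) hz hpv
  have hγ0 : (fun t : ℝ => ((1 - t) • (p + t • φ x), x)) 0 = (p, x) := by simp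
  have hpc : ContDiff ℝ 1 (fun t : ℝ => (1 - t) • (p + t • φ x)) :=
    ((contDiff_const.sub contDiff_id).smul
      (contDiff_const.add (contDiff_id.smul contDiff_const)))
  have hγsmooth : ContMDiff 𝓘(ℝ, ℝ) (𝓘(ℝ, EuclideanSpace ℝ (Fin (k+1))).prod (𝓡 m)) 1
      (fun t : ℝ => ((1 - t) • (p + t • φ x), x)) :=
    (hpc.contMDiff).prodMk contMDiff_const
  have hγmem : ∀ t ∈ Set.Icc (0:ℝ) ε,
      (fun t : ℝ => ((1 - t) • (p + t • φ x), x)) t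
        ∈ (Metric.closedBall (0 : EuclideanSpace ℝ (Fin (k+1))) 1) ×ˢ (Set.univ : Set M) := by
    intro t ht
    exact ⟨mem_closedBall_zero_iff.mpr (hball t ht), Set.mem_univ _⟩
  have hξmem : mfderiv 𝓘(ℝ, ℝ) (𝓘(ℝ, EuclideanSpace ℝ (Fin (k+1))).prod (𝓡 m))
        (fun t : ℝ => ((1 - t) • (p + t • φ x), x)) 0 (1 : ℝ)
      ∈ mTangentCone (𝓘(ℝ, EuclideanSpace ℝ (Fin (k+1))).prod (𝓡 m))
        ((Metric.closedBall (0 : EuclideanSpace ℝ (Fin (k+1))) 1) ×ˢ (Set.univ : Set M))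
        (p, x) :=
    subset_closure ⟨_, hγ0, hγsmooth, ⟨ε, hε, hγmem⟩, rfl⟩
  have hle := hcrit _ hξmem
  have hF : ContMDiff (𝓘(ℝ, EuclideanSpace ℝ (Fin (k+1))).prod (𝓡 m))
      𝓘(ℝ, EuclideanSpace ℝ (Fin (k+1)) × EuclideanSpace ℝ (Fin (k+1))) 1
      (fun w : EuclideanSpace ℝ (Fin (k+1)) × M => (w.1, φ w.2)) :=
    (contMDiff_prod_module_iff _).mpr ⟨contMDiff_fst, hφ.comp contMDiff_snd⟩
  have hB : ContDiff ℝ 1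
      (fun q : EuclideanSpace ℝ (Fin (k+1)) × EuclideanSpace ℝ (Fin (k+1)) =>
        (a + ⟪q.1, q.2⟫ : ℝ)) :=
    contDiff_const.add (contDiff_fst.inner ℝ contDiff_snd)
  have hfsmooth : ContMDiff (𝓘(ℝ, EuclideanSpace ℝ (Fin (k+1))).prod (𝓡 m)) 𝓘(ℝ, ℝ) 1
      (fun w : EuclideanSpace ℝ (Fin (k+1)) × M => (a + ⟪w.1, φ w.2⟫ : ℝ)) :=
    (hB.contMDiff).comp hF
  have hchain := mfderiv_comp (I := 𝓘(ℝ, ℝ))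
    (I' := (𝓘(ℝ, EuclideanSpace ℝ (Fin (k+1))).prod (𝓡 m))) (I'' := 𝓘(ℝ, ℝ)) (0 : ℝ)
    (g := fun w : EuclideanSpace ℝ (Fin (k+1)) × M => (a + ⟪w.1, φ w.2⟫ : ℝ))
    (f := fun t : ℝ => ((1 - t) • (p + t • φ x), x))
    (by exact hfsmooth.mdifferentiableAt one_ne_zero)
    (hγsmooth.mdifferentiableAt one_ne_zero)
  have hfγ : ((fun w : EuclideanSpace ℝ (Fin (k+1)) × M => (a + ⟪w.1, φ w.2⟫ : ℝ))
      ∘ (fun t : ℝ => ((1 - t) • (p + t • φ x), x)))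
      = fun t : ℝ => a + (1 - t) * (⟪p, φ x⟫ + t * ⟪φ x, φ x⟫) := by
    funext t
    show a + ⟪(1 - t) • (p + t • φ x), φ x⟫ = _
    rw [real_inner_smul_left, inner_add_left, real_inner_smul_left]
  have hd : HasDerivAt (fun t : ℝ => a + (1 - t) * (⟪p, φ x⟫ + t * ⟪φ x, φ x⟫))
      (⟪φ x, φ x⟫ - ⟪p, φ x⟫) 0 := by
    have h1 : HasDerivAt (fun t : ℝ => 1 - t) (-1) 0 := ((hasDerivAt_id 0).const_sub 1)
    have h2 : HasDerivAt (fun t : ℝ => ⟪p, φ x⟫ + t * ⟪φ x, φ x⟫) ⟪φ x, φ x⟫ 0 := by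
      have := ((hasDerivAt_id (0:ℝ)).mul_const (⟪φ x, φ x⟫ : ℝ)).const_add (⟪p, φ x⟫ : ℝ)
      simpa using this
    have h3 := (h1.mul h2).const_add a
    exact h3.congr_deriv (by ring)
  have hval : mfderiv 𝓘(ℝ, ℝ) 𝓘(ℝ, ℝ)
      ((fun w : EuclideanSpace ℝ (Fin (k+1)) × M => (a + ⟪w.1, φ w.2⟫ : ℝ))
        ∘ (fun t : ℝ => ((1 - t) • (p + t • φ x), x))) 0 (1:ℝ)
      = ⟪φ x, φ x⟫ - ⟪p, φ x⟫ := by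
    have h5 : HasMFDerivAt 𝓘(ℝ, ℝ) 𝓘(ℝ, ℝ)
        ((fun w : EuclideanSpace ℝ (Fin (k+1)) × M => (a + ⟪w.1, φ w.2⟫ : ℝ))
          ∘ (fun t : ℝ => ((1 - t) • (p + t • φ x), x))) 0
        (ContinuousLinearMap.smulRight (1 : ℝ →L[ℝ] ℝ) (⟪φ x, φ x⟫ - ⟪p, φ x⟫)) := by
      rw [hfγ]
      exact hd.hasFDerivAt.hasMFDerivAt
    rw [h5.mfderiv]
    show (1:ℝ) • ((⟪φ x, φ x⟫ : ℝ) - ⟪p, φ x⟫) = _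
    rw [one_smul]
  have hcomp : mfderiv 𝓘(ℝ, ℝ) 𝓘(ℝ, ℝ)
      ((fun w : EuclideanSpace ℝ (Fin (k+1)) × M => (a + ⟪w.1, φ w.2⟫ : ℝ))
        ∘ (fun t : ℝ => ((1 - t) • (p + t • φ x), x))) 0 (1:ℝ)
      = mfderiv (𝓘(ℝ, EuclideanSpace ℝ (Fin (k+1))).prod (𝓡 m)) 𝓘(ℝ, ℝ)
          (fun w : EuclideanSpace ℝ (Fin (k+1)) × M => (a + ⟪w.1, φ w.2⟫ : ℝ)) (p, x)
          (mfderiv 𝓘(ℝ, ℝ) (𝓘(ℝ, EuclideanSpace ℝ (Fin (k+1))).prod (𝓡 m))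
            (fun t : ℝ => ((1 - t) • (p + t • φ x), x)) 0 (1 : ℝ)) := by
    rw [hchain, show ((1 - 0 : ℝ) • (p + (0:ℝ) • φ x), x) = (p, x) by simp]; rfl
  rw [← hcomp, hval] at hle
  have hvv : (⟪φ x, φ x⟫ : ℝ) = ‖φ x‖ ^ 2 := real_inner_self_eq_norm_sq (φ x)
  linarith

/-- for a `C¹` map `φ : M → ℝ^{k+1}` and `g(p,x) = ⟨p, φ(x)⟩` on
`B^{k+1} × M` (`B^{k+1}` the closed unit ball), `g` has a critical point (in the tangent-cone
sense) at level `0` iff `φ⁻¹(0) ≠ ∅`; moreover for every `c > 0` the function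
`(p,x) ↦ c + ⟨p, φ(x)⟩` has no critical point at level `0`. -/
theorem statement13 {k m : ℕ} {M : Type*} [TopologicalSpace M]
    [ChartedSpace (EuclideanSpace ℝ (Fin m)) M]
    [IsManifold (𝓡 m) (⊤ : ℕ∞) M] [CompactSpace M]
    (φ : M → EuclideanSpace ℝ (Fin (k+1)))
    (hφ : ContMDiff (𝓡 m) 𝓘(ℝ, EuclideanSpace ℝ (Fin (k+1))) 1 φ)
    (W : Set (EuclideanSpace ℝ (Fin (k+1)) × M))
    (hW : W = (Metric.closedBall (0 : EuclideanSpace ℝ (Fin (k+1))) 1) ×ˢ Set.univ) :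
    ((∃ z ∈ W, ⟪z.1, φ z.2⟫ = 0 ∧
        IsMCriticalPt (𝓘(ℝ, EuclideanSpace ℝ (Fin (k+1))).prod (𝓡 m))
          (fun w : EuclideanSpace ℝ (Fin (k+1)) × M => (⟪w.1, φ w.2⟫ : ℝ)) W z) ↔
      (∃ x : M, φ x = 0)) ∧
    (∀ c : ℝ, 0 < c → ∀ z ∈ W, c + ⟪z.1, φ z.2⟫ = 0 →
      ¬ IsMCriticalPt (𝓘(ℝ, EuclideanSpace ℝ (Fin (k+1))).prod (𝓡 m))
          (fun w : EuclideanSpace ℝ (Fin (k+1)) × M => (c + ⟪w.1, φ w.2⟫ : ℝ)) W z) := by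
  subst hW
  constructor
  · constructor
    · rintro ⟨z, hzW, hz0, hcrit⟩
      refine ⟨z.2, ?_⟩
      have hz1 : ‖z.1‖ ≤ 1 := by
        have := hzW.1
        rwa [Metric.mem_closedBall, dist_zero_right] at this
      have hcrit' : IsMCriticalPt (𝓘(ℝ, EuclideanSpace ℝ (Fin (k+1))).prod (𝓡 m))
          (fun w : EuclideanSpace ℝ (Fin (k+1)) × M => ((0:ℝ) + ⟪w.1, φ w.2⟫ : ℝ))
          ((Metric.closedBall (0 : EuclideanSpace ℝ (Fin (k+1))) 1) ×ˢ Set.univ) z := by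
        have heq : (fun w : EuclideanSpace ℝ (Fin (k+1)) × M => ((0:ℝ) + ⟪w.1, φ w.2⟫ : ℝ))
            = fun w : EuclideanSpace ℝ (Fin (k+1)) × M => (⟪w.1, φ w.2⟫ : ℝ) := by
          funext w; ring
        rw [heq]
        exact hcrit
      have hk := aux_key φ hφ 0 z hz1 (le_of_eq hz0) hcrit'
      rw [hz0] at hk
      exact norm_eq_zero.mp (by nlinarith [norm_nonneg (φ z.2)])
    · rintro ⟨x₀, hx₀⟩
      refine ⟨(0, x₀), ⟨Metric.mem_closedBall_self zero_le_one, Set.mem_univ _⟩, ?_, ?_⟩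
      · simp
      · intro ξ _
        have hF : ContMDiff (𝓘(ℝ, EuclideanSpace ℝ (Fin (k+1))).prod (𝓡 m))
            𝓘(ℝ, EuclideanSpace ℝ (Fin (k+1)) × EuclideanSpace ℝ (Fin (k+1))) 1
            (fun w : EuclideanSpace ℝ (Fin (k+1)) × M => (w.1, φ w.2)) :=
          (contMDiff_prod_module_iff _).mpr ⟨contMDiff_fst, hφ.comp contMDiff_snd⟩
        have hFz : (fun w : EuclideanSpace ℝ (Fin (k+1)) × M => (w.1, φ w.2))
            ((0 : EuclideanSpace ℝ (Fin (k+1))), x₀)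
            = ((0 : EuclideanSpace ℝ (Fin (k+1))), (0 : EuclideanSpace ℝ (Fin (k+1)))) := by
          show ((0 : EuclideanSpace ℝ (Fin (k+1))), φ x₀) = _
          rw [hx₀]
        have hB0 : HasFDerivAt
            (fun q : EuclideanSpace ℝ (Fin (k+1)) × EuclideanSpace ℝ (Fin (k+1)) =>
              (⟪q.1, q.2⟫ : ℝ))
            (0 : EuclideanSpace ℝ (Fin (k+1)) × EuclideanSpace ℝ (Fin (k+1)) →L[ℝ] ℝ)
            ((0 : EuclideanSpace ℝ (Fin (k+1))), (0 : EuclideanSpace ℝ (Fin (k+1)))) := by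
          have h := (isBoundedBilinearMap_inner (𝕜 := ℝ)
            (E := EuclideanSpace ℝ (Fin (k+1)))).hasFDerivAt
            ((0 : EuclideanSpace ℝ (Fin (k+1))), (0 : EuclideanSpace ℝ (Fin (k+1))))
          have hz : (isBoundedBilinearMap_inner (𝕜 := ℝ)
              (E := EuclideanSpace ℝ (Fin (k+1)))).deriv
              ((0 : EuclideanSpace ℝ (Fin (k+1))), (0 : EuclideanSpace ℝ (Fin (k+1))))
              = 0 := by
            refine ContinuousLinearMap.ext fun q => ?_
            rw [IsBoundedBilinearMap.deriv_apply]
            simp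
          rwa [hz] at h
        have hchain := mfderiv_comp
          (I := (𝓘(ℝ, EuclideanSpace ℝ (Fin (k+1))).prod (𝓡 m)))
          (I' := 𝓘(ℝ, EuclideanSpace ℝ (Fin (k+1)) × EuclideanSpace ℝ (Fin (k+1))))
          (I'' := 𝓘(ℝ, ℝ))
          ((0 : EuclideanSpace ℝ (Fin (k+1))), x₀)
          (g := fun q : EuclideanSpace ℝ (Fin (k+1)) × EuclideanSpace ℝ (Fin (k+1)) =>
            (⟪q.1, q.2⟫ : ℝ))
          (f := fun w : EuclideanSpace ℝ (Fin (k+1)) × M => (w.1, φ w.2))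
          (by simp only [hx₀]; exact hB0.differentiableAt.mdifferentiableAt)
          (hF.mdifferentiableAt one_ne_zero)
        have hBz : mfderiv 𝓘(ℝ, EuclideanSpace ℝ (Fin (k+1)) × EuclideanSpace ℝ (Fin (k+1)))
            𝓘(ℝ, ℝ)
            (fun q : EuclideanSpace ℝ (Fin (k+1)) × EuclideanSpace ℝ (Fin (k+1)) =>
              (⟪q.1, q.2⟫ : ℝ))
            ((fun w : EuclideanSpace ℝ (Fin (k+1)) × M => (w.1, φ w.2))
              ((0 : EuclideanSpace ℝ (Fin (k+1))), x₀)) = 0 := by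
          rw [hFz, mfderiv_eq_fderiv, hB0.fderiv]
          rfl
        have hgoal : mfderiv (𝓘(ℝ, EuclideanSpace ℝ (Fin (k+1))).prod (𝓡 m)) 𝓘(ℝ, ℝ)
            (fun w : EuclideanSpace ℝ (Fin (k+1)) × M => (⟪w.1, φ w.2⟫ : ℝ))
            ((0 : EuclideanSpace ℝ (Fin (k+1))), x₀) = 0 := by
          rw [show (fun w : EuclideanSpace ℝ (Fin (k+1)) × M => (⟪w.1, φ w.2⟫ : ℝ))
            = (fun q : EuclideanSpace ℝ (Fin (k+1)) × EuclideanSpace ℝ (Fin (k+1)) =>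
                (⟪q.1, q.2⟫ : ℝ))
              ∘ (fun w : EuclideanSpace ℝ (Fin (k+1)) × M => (w.1, φ w.2)) from rfl,
            hchain, hBz]
          ext w
          rfl
        rw [hgoal]
        exact le_of_eq (ContinuousLinearMap.zero_apply ξ)
  · intro c hc z hzW hlvl hcrit
    have hz1 : ‖z.1‖ ≤ 1 := by
      have := hzW.1
      rwa [Metric.mem_closedBall, dist_zero_right] at this
    have hpv : ⟪z.1, φ z.2⟫ ≤ 0 := by linarith
    have hk := aux_key φ hφ c z hz1 hpv hcrit
    nlinarith [norm_nonneg (φ z.2)]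
end

section
/- Let a be a nonzero purely imaginary quaternion and p a purely imaginary quaternion. The real quadratic form q_p on ℍ = ℝ⁴ defined by q_p(x) = ⟨p, x̄ a x⟩ has eigenvalues ‖p‖·‖a‖, ‖p‖·‖a‖, −‖p‖·‖a‖, −‖p‖·‖a‖ (counted with multiplicity). -/
open Quaternion

/-- The eigenvalues of a real symmetric matrix, counted with multiplicity and listed in
decreasing order. -/
noncomputable def sortedEigenvalues {n : ℕ} {A : Matrix (Fin n) (Fin n) ℝ}
    (hA : A.IsHermitian) : Fin n → ℝ :=
  fun i => (hA.eigenvalues ∘ Tuple.sort hA.eigenvalues) i.rev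

/-- The standard real basis `1, i, j, k` of the quaternions, identifying `ℍ = ℝ⁴`. -/
noncomputable def quatBasis : Fin 4 → ℍ[ℝ] :=
  ![1, ⟨0,1,0,0⟩, ⟨0,0,1,0⟩, ⟨0,0,0,1⟩]

/-- The symmetric 4×4 matrix (w.r.t. the basis `1, i, j, k` of `ℍ = ℝ⁴`) of the real quadratic
form `q_p(x) = ⟨p, x̄ a x⟩`, where `⟨u,v⟩ = Re(ū v)`; its entries are the values of the
associated symmetric bilinear form on basis vectors. -/
noncomputable def qpMatrix (p a : ℍ[ℝ]) : Matrix (Fin 4) (Fin 4) ℝ :=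
  fun i j =>
    ((star p * (star (quatBasis i) * a * quatBasis j)).re
      + (star p * (star (quatBasis j) * a * quatBasis i)).re) / 2

lemma qpMatrix_explicit (p a : ℍ[ℝ]) (ha0 : a.re = 0) (hp : p.re = 0) :
    qpMatrix p a = !![a.imI*p.imI + a.imJ*p.imJ + a.imK*p.imK, -a.imJ*p.imK + a.imK*p.imJ,
        a.imI*p.imK - a.imK*p.imI, -a.imI*p.imJ + a.imJ*p.imI;
      -a.imJ*p.imK + a.imK*p.imJ, a.imI*p.imI - a.imJ*p.imJ - a.imK*p.imK,
        a.imI*p.imJ + a.imJ*p.imI, a.imI*p.imK + a.imK*p.imI;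
      a.imI*p.imK - a.imK*p.imI, a.imI*p.imJ + a.imJ*p.imI,
        -a.imI*p.imI + a.imJ*p.imJ - a.imK*p.imK, a.imJ*p.imK + a.imK*p.imJ;
      -a.imI*p.imJ + a.imJ*p.imI, a.imI*p.imK + a.imK*p.imI, a.imJ*p.imK + a.imK*p.imJ,
        -a.imI*p.imI - a.imJ*p.imJ + a.imK*p.imK] := by
  ext i j
  fin_cases i <;> fin_cases j <;>
    · simp only [qpMatrix, Quaternion.re_mul, Quaternion.imI_mul, Quaternion.imJ_mul,
        Quaternion.imK_mul, Quaternion.re_star, Quaternion.imI_star, Quaternion.imJ_star,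
        Quaternion.imK_star]
      simp [qpMatrix, quatBasis, Quaternion.re_mul, Quaternion.imI_mul, Quaternion.imJ_mul,
        Quaternion.imK_mul, ha0, hp]
      ring

lemma qpMatrix_isHermitian (p a : ℍ[ℝ]) : (qpMatrix p a).IsHermitian := by
  ext i j
  simp only [qpMatrix, Matrix.conjTranspose_apply, star_trivial]
  ring

lemma qpMatrix_sq (p a : ℍ[ℝ]) (ha0 : a.re = 0) (hp : p.re = 0) :
    qpMatrix p a * qpMatrix p a
      = ((p.imI^2+p.imJ^2+p.imK^2)*(a.imI^2+a.imJ^2+a.imK^2))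
          • (1 : Matrix (Fin 4) (Fin 4) ℝ) := by
  rw [qpMatrix_explicit p a ha0 hp]
  ext i j
  fin_cases i <;> fin_cases j <;>
    · simp [Matrix.mul_apply, Fin.sum_univ_four, Matrix.one_apply]
      ring

lemma qpMatrix_trace (p a : ℍ[ℝ]) (ha0 : a.re = 0) (hp : p.re = 0) :
    (qpMatrix p a).trace = 0 := by
  rw [qpMatrix_explicit p a ha0 hp]
  simp [Matrix.trace, Fin.sum_univ_four]
  ring

lemma sum_eigenvalues_eq_trace {n : ℕ} {A : Matrix (Fin n) (Fin n) ℝ} (hA : A.IsHermitian) :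
    ∑ i, hA.eigenvalues i = A.trace := by
  conv_rhs => rw [hA.spectral_theorem]
  rw [Unitary.conjStarAlgAut_apply]
  rw [Matrix.trace_mul_cycle]
  rw [show (star (hA.eigenvectorUnitary : Matrix (Fin n) (Fin n) ℝ))
      * (hA.eigenvectorUnitary : Matrix (Fin n) (Fin n) ℝ) = 1 from
    Unitary.coe_star_mul_self hA.eigenvectorUnitary, Matrix.one_mul, Matrix.trace_diagonal]
  simp

lemma sort_of_pm (c : ℝ) (hc : 0 ≤ c) (g : Fin 4 → ℝ) (hm : Monotone g)
    (hsq : ∀ i, g i ^ 2 = c ^ 2) (hsum : g 0 + g 1 + g 2 + g 3 = 0) :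
    g = ![-c, -c, c, c] := by
  have key : ∀ i, g i = c ∨ g i = -c := by
    intro i
    have h : (g i - c) * (g i + c) = 0 := by have := hsq i; nlinarith
    rcases mul_eq_zero.mp h with h | h
    · left; linarith
    · right; linarith
  have h01 : g 0 ≤ g 1 := hm (by decide)
  have h12 : g 1 ≤ g 2 := hm (by decide)
  have h23 : g 2 ≤ g 3 := hm (by decide)
  funext i
  rcases key 0 with k0 | k0 <;> rcases key 1 with k1 | k1 <;> rcases key 2 with k2 | k2 <;>
    rcases key 3 with k3 | k3 <;>
  · fin_cases i <;> simp <;> linarith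

/-- for a nonzero purely imaginary quaternion `a` and a purely imaginary
quaternion `p`, the real quadratic form `q_p(x) = ⟨p, x̄ a x⟩` on `ℍ = ℝ⁴` has eigenvalues
`‖p‖‖a‖, ‖p‖‖a‖, −‖p‖‖a‖, −‖p‖‖a‖` (in decreasing order, counted with multiplicity). -/
theorem statement17 (a p : ℍ[ℝ]) (ha0 : a.re = 0) (ha : a ≠ 0) (hp : p.re = 0) :
    ∃ h : (qpMatrix p a).IsHermitian,
      sortedEigenvalues h
        = ![‖p‖ * ‖a‖, ‖p‖ * ‖a‖, -(‖p‖ * ‖a‖), -(‖p‖ * ‖a‖)] := by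
  refine ⟨qpMatrix_isHermitian p a, ?_⟩
  set hA := qpMatrix_isHermitian p a
  set c : ℝ := ‖p‖ * ‖a‖ with hc_def
  have hc : 0 ≤ c := mul_nonneg (norm_nonneg _) (norm_nonneg _)
  have hc2 : c ^ 2 = (p.imI^2+p.imJ^2+p.imK^2)*(a.imI^2+a.imJ^2+a.imK^2) := by
    have hnp : ‖p‖ ^ 2 = normSq p := by
      rw [sq, ← Quaternion.normSq_eq_norm_mul_self]
    have hna : ‖a‖ ^ 2 = normSq a := by
      rw [sq, ← Quaternion.normSq_eq_norm_mul_self]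
    rw [hc_def, mul_pow, hnp, hna, Quaternion.normSq_def', Quaternion.normSq_def', ha0, hp]
    ring
  -- every eigenvalue squares to c^2
  have heig : ∀ i, hA.eigenvalues i ^ 2 = c ^ 2 := by
    intro i
    have hv := hA.mulVec_eigenvectorBasis i
    have hv2 : Matrix.mulVec (qpMatrix p a * qpMatrix p a) ⇑(hA.eigenvectorBasis i)
        = (hA.eigenvalues i ^ 2) • ⇑(hA.eigenvectorBasis i) := by
      rw [← Matrix.mulVec_mulVec, hv, Matrix.mulVec_smul, hv, smul_smul, sq]
    rw [qpMatrix_sq p a ha0 hp] at hv2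
    have hv3 : ((p.imI^2+p.imJ^2+p.imK^2)*(a.imI^2+a.imJ^2+a.imK^2))
        • ⇑(hA.eigenvectorBasis i) = (hA.eigenvalues i ^ 2) • ⇑(hA.eigenvectorBasis i) := by
      rw [← hv2, Matrix.smul_mulVec, Matrix.one_mulVec]
    have hne : ∃ x, (hA.eigenvectorBasis i) x ≠ 0 := by
      by_contra h
      push_neg at h
      exact hA.eigenvectorBasis.orthonormal.ne_zero i (by ext x; exact h x)
    obtain ⟨x, hx⟩ := hne
    have h5 := congrFun hv3 x
    simp only [Pi.smul_apply, smul_eq_mul] at h5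
    have := mul_right_cancel₀ hx h5
    rw [hc2, this]
  have hsum : ∑ i, hA.eigenvalues i = 0 := by
    rw [sum_eigenvalues_eq_trace, qpMatrix_trace p a ha0 hp]
  set g : Fin 4 → ℝ := hA.eigenvalues ∘ Tuple.sort hA.eigenvalues with hg
  have hgm : Monotone g := Tuple.monotone_sort _
  have hgsq : ∀ i, g i ^ 2 = c ^ 2 := fun i => heig _
  have hgsum : g 0 + g 1 + g 2 + g 3 = 0 := by
    have : ∑ i, g i = ∑ i, hA.eigenvalues i := by
      exact Equiv.sum_comp (Tuple.sort hA.eigenvalues) hA.eigenvalues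
    rw [Fin.sum_univ_four] at this
    rw [this, hsum]
  have hge := sort_of_pm c hc g hgm hgsq hgsum
  funext i
  show g i.rev = _
  fin_cases i <;> simp [hge, Fin.rev]
end
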